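/- Let n ≥ 1 be an integer, let w = exp(πi/n) ∈ ℂ, and let g(z) = ∏_{k=1}^{n-1} (z - w^k) ∈ ℂ[z]. Then the n polynomials z ↦ g(w^{-2r}·z) for r = 1, 2, …, n are linearly independent over ℂ. (This statement is equivalent to the non-vanishing of the Atiyah determinant at the vertices of a regular n-gon, i.e., to Atiyah's first conjecture in that case.) -/

import Mathlib

open Polynomial Finset

theorem coeff_comp_C_mul_X (p : ℂ[X]) (c : ℂ) (j : ℕ) :
    (p.comp (C c * X)).coeff j = c ^ j * p.coeff j := by
  induction p using Polynomial.induction_on' with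
  | add p q hp hq => simp [add_comp, hp, hq, mul_add]
  | monomial k a =>
    rw [monomial_comp, mul_pow, ← C_pow, ← mul_assoc, ← C_mul, coeff_C_mul, coeff_X_pow,
      coeff_monomial]
    rcases eq_or_ne j k with h | h
    · simp [h, mul_comm]
    · simp [h, Ne.symm h]

theorem coeff_g_ne_zero (n : ℕ) (hn : 1 ≤ n) (w : ℂ)
    (hprim : IsPrimitiveRoot w (2 * n))
    (g : ℂ[X]) (hg : g = ∏ k ∈ Finset.Icc 1 (n - 1), (X - C (w ^ k)))
    (j : ℕ) (hj : j ≤ n - 1) : g.coeff j ≠ 0 := by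
  have hw0 : w ≠ 0 := hprim.ne_zero (by omega)
  have hwk : ∀ k : ℕ, 1 ≤ k → k < 2 * n → w ^ k ≠ 1 := by
    intro k h1 h2 h
    have := (hprim.pow_eq_one_iff_dvd k).mp h
    have := Nat.le_of_dvd (by omega) this
    omega
  -- rewrite g over range
  have hIcc : Finset.Icc 1 (n - 1) = Finset.Ico 1 n := by
    ext x; simp [Finset.mem_Icc, Finset.mem_Ico]; omega
  have hg' : g = ∏ i ∈ range (n - 1), (X - C (w ^ (1 + i))) := by
    rw [hg, hIcc, Finset.prod_Ico_eq_prod_range]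
  -- functional equation
  have hfe : (X - C (w ^ (n - 1))) * g.comp (C w * X)
      = C (w ^ (n - 1)) * ((X - C 1) * g) := by
    have hcomp : g.comp (C w * X)
        = C (w ^ (n - 1)) * ∏ i ∈ range (n - 1), (X - C (w ^ i)) := by
      rw [hg', Polynomial.prod_comp]
      have : ∀ i ∈ range (n - 1), (X - C (w ^ (1 + i))).comp (C w * X)
          = C w * (X - C (w ^ i)) := by
        intro i _
        rw [sub_comp, X_comp, C_comp, mul_sub, ← C_mul, pow_add, pow_one]
      rw [Finset.prod_congr rfl this, Finset.prod_mul_distrib, Finset.prod_const,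
        card_range, ← C_pow]
    rw [hcomp, hg']
    have h1 : (X - C (w ^ (n - 1))) * (C (w ^ (n - 1)) * ∏ i ∈ range (n - 1), (X - C (w ^ i)))
        = C (w ^ (n - 1)) * ((∏ i ∈ range (n - 1), (X - C (w ^ i))) * (X - C (w ^ (n - 1)))) := by
      ring
    rw [h1, ← Finset.prod_range_succ (fun i => X - C (w ^ i)) (n - 1)]
    have h2 : n - 1 + 1 = n := by omega
    rw [h2]
    congr 1
    obtain ⟨m, rfl⟩ : ∃ m, n = m + 1 := ⟨n - 1, by omega⟩
    rw [Finset.prod_range_succ' (fun i => X - C (w ^ i)) m]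
    simp [mul_comm, add_comm]
  -- coefficient recursion
  have key : ∀ i : ℕ, w ^ i * g.coeff i - w ^ (n - 1) * (w ^ (i + 1) * g.coeff (i + 1))
      = w ^ (n - 1) * (g.coeff i - g.coeff (i + 1)) := by
    intro i
    have h := congrArg (fun p : ℂ[X] => p.coeff (i + 1)) hfe
    simp only [sub_mul, mul_sub, coeff_sub, coeff_X_mul, coeff_C_mul,
      coeff_comp_C_mul_X, one_mul, C_1, mul_one] at h
    linear_combination h
  -- leading coefficient
  have hmonic : g.Monic := by
    rw [hg]; exact monic_prod_of_monic _ _ fun k _ => monic_X_sub_C _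
  have hdeg : g.natDegree = n - 1 := by
    rw [hg', natDegree_prod _ _ fun i _ => X_sub_C_ne_zero _]
    simp only [natDegree_X_sub_C, Finset.sum_const, card_range, smul_eq_mul, mul_one]
  have htop : g.coeff (n - 1) = 1 := by
    have := hmonic.leadingCoeff
    rwa [leadingCoeff, hdeg] at this
  -- downward induction
  suffices H : ∀ d : ℕ, d ≤ n - 1 → g.coeff (n - 1 - d) ≠ 0 by
    have := H (n - 1 - j) (by omega)
    rwa [show n - 1 - (n - 1 - j) = j by omega] at this
  intro d
  induction d with
  | zero => intro _; simp [htop]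
  | succ d ih =>
    intro hd
    set j0 := n - 1 - (d + 1) with hj0
    have hj01 : j0 + 1 = n - 1 - d := by omega
    have hb : g.coeff (j0 + 1) ≠ 0 := by rw [hj01]; exact ih (by omega)
    have hrel : g.coeff j0 * (w ^ j0 - w ^ (n - 1))
        = g.coeff (j0 + 1) * (w ^ (n - 1) * (w ^ (j0 + 1) - 1)) := by
      linear_combination key j0
    have hne : g.coeff (j0 + 1) * (w ^ (n - 1) * (w ^ (j0 + 1) - 1)) ≠ 0 := by
      refine mul_ne_zero hb (mul_ne_zero (pow_ne_zero _ hw0) (sub_ne_zero.mpr ?_))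
      exact hwk (j0 + 1) (by omega) (by omega)
    intro ha
    rw [ha, zero_mul] at hrel
    exact hne hrel.symm

/-- For `w = exp(πi/n)` and `g(z) = ∏_{k=1}^{n-1} (z - w^k)`, the `n` polynomials
`z ↦ g(w^{-2r}·z)`, `r = 1, …, n`, are linearly independent over `ℂ`. -/
theorem linearIndependent_regular_ngon_polynomials (n : ℕ) (hn : 1 ≤ n)
    (w : ℂ) (hw : w = Complex.exp (Real.pi * Complex.I / n))
    (g : Polynomial ℂ)
    (hg : g = ∏ k ∈ Finset.Icc 1 (n - 1), (Polynomial.X - Polynomial.C (w ^ k))) :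
    LinearIndependent ℂ (fun r : Fin n =>
      g.comp (Polynomial.C (w ^ ((-2 : ℤ) * ((r : ℕ) + 1))) * Polynomial.X)) := by
  have hn0 : (n : ℂ) ≠ 0 := Nat.cast_ne_zero.mpr (by omega)
  have hprim : IsPrimitiveRoot w (2 * n) := by
    rw [hw]
    convert Complex.isPrimitiveRoot_exp (2 * n) (by omega) using 2
    push_cast
    field_simp
  have hw0 : w ≠ 0 := hprim.ne_zero (by omega)
  set c : Fin n → ℂ := fun r => w ^ ((-2 : ℤ) * ((r : ℕ) + 1)) with hcdef
  set ζ : ℂ := (w ^ 2)⁻¹ with hζdef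
  have hzeta : IsPrimitiveRoot ζ n := (hprim.pow (by omega) rfl).inv
  have hzeta0 : ζ ≠ 0 := hzeta.ne_zero (by omega)
  have hc : ∀ r : Fin n, c r = ζ ^ ((r : ℕ) + 1) := by
    intro r
    show w ^ ((-2 : ℤ) * ((r : ℕ) + 1)) = ζ ^ ((r : ℕ) + 1)
    rw [zpow_mul, show (((r : ℕ) : ℤ) + 1) = (((r : ℕ) + 1 : ℕ) : ℤ) by push_cast; ring,
      zpow_natCast, hζdef]
    simp [zpow_neg, inv_pow]
  have hcinj : Function.Injective c := by
    intro r s h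
    rw [hc, hc, pow_succ', pow_succ'] at h
    have := mul_left_cancel₀ hzeta0 h
    exact Fin.ext (hzeta.pow_inj r.isLt s.isLt this)
  set M : Matrix (Fin n) (Fin n) ℂ :=
    fun r j0 => (c r) ^ (j0 : ℕ) * g.coeff (j0 : ℕ) with hMdef
  have hM : M = Matrix.vandermonde c * Matrix.diagonal (fun j0 : Fin n => g.coeff (j0 : ℕ)) := by
    ext r j0
    rw [Matrix.mul_diagonal]
    simp [hMdef, Matrix.vandermonde]
  have hunit : IsUnit M := by
    rw [Matrix.isUnit_iff_isUnit_det, hM, Matrix.det_mul, Matrix.det_diagonal, isUnit_iff_ne_zero]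
    refine mul_ne_zero (Matrix.det_vandermonde_ne_zero_iff.mpr hcinj) ?_
    exact Finset.prod_ne_zero_iff.mpr fun j0 _ =>
      coeff_g_ne_zero n hn w hprim g hg (j0 : ℕ) (by omega)
  have hli : LinearIndependent ℂ (fun r => M r) :=
    Matrix.linearIndependent_rows_iff_isUnit.mpr hunit
  set Φ : Polynomial ℂ →ₗ[ℂ] (Fin n → ℂ) :=
    LinearMap.pi (fun j0 : Fin n => Polynomial.lcoeff ℂ (j0 : ℕ)) with hΦ
  refine LinearIndependent.of_comp Φ ?_
  have heq : (Φ ∘ fun r : Fin n => g.comp (Polynomial.C (c r) * Polynomial.X))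
      = fun r => M r := by
    funext r j0
    simp [hΦ, hMdef, coeff_comp_C_mul_X]
    ring
  exact heq ▸ hli
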